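/- If c ∈ ℚ is such that f_c(x) = x² + c admits four distinct rational second pre-images of the origin (i.e., the equation (x²+c)²+c = 0 has four distinct rational solutions), then there exists t ∈ ℚ with t ∉ {0, 1, -1} such that c = -(t²+1)⁴ / (16 t² (t²-1)²). -/

import Mathlib

/-- If `f_c(x) = x² + c` admits four distinct rational second pre-images of the
origin, then `c = -(t²+1)⁴ / (16 t² (t²-1)²)` for some `t ∈ ℚ \ {0, 1, -1}`. -/
theorem stmt_1 (c : ℚ)
    (h : ∃ x₁ x₂ x₃ x₄ : ℚ, x₁ ≠ x₂ ∧ x₁ ≠ x₃ ∧ x₁ ≠ x₄ ∧ x₂ ≠ x₃ ∧ x₂ ≠ x₄ ∧ x₃ ≠ x₄ ∧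
      (x₁ ^ 2 + c) ^ 2 + c = 0 ∧ (x₂ ^ 2 + c) ^ 2 + c = 0 ∧
      (x₃ ^ 2 + c) ^ 2 + c = 0 ∧ (x₄ ^ 2 + c) ^ 2 + c = 0) :
    ∃ t : ℚ, t ≠ 0 ∧ t ≠ 1 ∧ t ≠ -1 ∧
      c = -(t ^ 2 + 1) ^ 4 / (16 * t ^ 2 * (t ^ 2 - 1) ^ 2) := by
  obtain ⟨x₁, x₂, x₃, x₄, h12, h13, h14, h23, h24, h34, e1, e2, e3, e4⟩ := h
  -- extract a pair a, b with a^2+c = y, b^2+c = -y, y ≠ 0, y^2 = -c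
  have key : ∃ a b y : ℚ, y ≠ 0 ∧ a ^ 2 + c = y ∧ b ^ 2 + c = -y ∧ y ^ 2 = -c := by
    have pair : ∀ p q : ℚ, (p ^ 2 + c) ^ 2 + c = 0 → (q ^ 2 + c) ^ 2 + c = 0 →
        p ^ 2 + c ≠ q ^ 2 + c →
        ∃ a b y : ℚ, y ≠ 0 ∧ a ^ 2 + c = y ∧ b ^ 2 + c = -y ∧ y ^ 2 = -c := by
      intro p q hp hq hne
      have h0 : ((p ^ 2 + c) - (q ^ 2 + c)) * ((p ^ 2 + c) + (q ^ 2 + c)) = 0 := by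
        linear_combination hp - hq
      rcases mul_eq_zero.mp h0 with h' | h'
      · exact absurd (by linarith) hne
      · refine ⟨p, q, p ^ 2 + c, ?_, rfl, by linarith, by linear_combination hp⟩
        intro h0'
        apply hne
        have : q ^ 2 + c = 0 := by linarith
        rw [h0', this]
    by_cases hne : x₁ ^ 2 + c = x₂ ^ 2 + c
    · by_cases hne2 : x₁ ^ 2 + c = x₃ ^ 2 + c
      · exfalso
        have s2 : x₂ = -x₁ := by
          have h0 : (x₂ - x₁) * (x₂ + x₁) = 0 := by linear_combination -hne
          rcases mul_eq_zero.mp h0 with h' | h'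
          · exact absurd (by linarith) h12.symm
          · linarith
        have s3 : x₃ = -x₁ := by
          have h0 : (x₃ - x₁) * (x₃ + x₁) = 0 := by linear_combination -hne2
          rcases mul_eq_zero.mp h0 with h' | h'
          · exact absurd (by linarith) h13.symm
          · linarith
        exact h23 (s2.trans s3.symm)
      · exact pair x₁ x₃ e1 e3 hne2
    · exact pair x₁ x₂ e1 e2 hne
  obtain ⟨a, b, y, hy0, ea, eb, hyc⟩ := key
  obtain ⟨u, hu_def⟩ : ∃ u : ℚ, u = a / y := ⟨_, rfl⟩
  obtain ⟨v, hv_def⟩ : ∃ v : ℚ, v = b / y := ⟨_, rfl⟩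
  have huv2 : u ^ 2 + v ^ 2 = 2 := by
    have h2 : (u ^ 2 + v ^ 2) * y ^ 2 = 2 * y ^ 2 := by
      rw [hu_def, hv_def]
      field_simp
      linear_combination ea + eb - 2 * hyc
    exact mul_right_cancel₀ (pow_ne_zero 2 hy0) h2
  have huvy : (u ^ 2 - v ^ 2) * y = 2 := by
    have h2 : ((u ^ 2 - v ^ 2) * y) * y ^ 2 = 2 * y ^ 2 := by
      rw [hu_def, hv_def]
      field_simp
      linear_combination ea - eb
    exact mul_right_cancel₀ (pow_ne_zero 2 hy0) h2
  have huvne : u ^ 2 ≠ v ^ 2 := by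
    intro h'
    rw [h'] at huvy
    simp at huvy
  have hu1 : u - 1 ≠ 0 := by
    intro h'
    have hu : u = 1 := by linarith
    have : a = y := by
      rw [hu_def, div_eq_one_iff_eq hy0] at hu
      exact hu
    apply hy0
    have : a ^ 2 = y ^ 2 := by rw [this]
    linarith [hyc, ea, this]
  obtain ⟨t, ht_def⟩ : ∃ t : ℚ, t = (v - 1) / (u - 1) := ⟨_, rfl⟩
  have hvt : v = t * (u - 1) + 1 := by
    rw [ht_def, div_mul_cancel₀ _ hu1]; ring
  have ht0 : t ≠ 0 := by
    intro h'
    rw [h'] at hvt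
    have hv1 : v = 1 := by linarith
    apply huvne
    rw [hv1]
    nlinarith [huv2]
  have ht1 : t ≠ 1 := by
    intro h'
    rw [h'] at hvt
    have : v = u := by linarith
    exact huvne (by rw [this])
  have htm1 : t ≠ -1 := by
    intro h'
    rw [h'] at hvt
    have hv2 : v = 2 - u := by linarith
    apply hu1
    nlinarith [huv2, hv2]
  -- derive the parametrization
  have keyu : (u - 1) * ((t ^ 2 + 1) * u - (t ^ 2 - 2 * t - 1)) = 0 := by
    linear_combination huv2 - (v + t * (u - 1) + 1) * hvt
  have hu : (t ^ 2 + 1) * u = t ^ 2 - 2 * t - 1 := by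
    rcases mul_eq_zero.mp keyu with h' | h'
    · exact absurd h' hu1
    · linarith
  have hv : (t ^ 2 + 1) * v = -(t ^ 2) - 2 * t + 1 := by
    linear_combination hvt * (t ^ 2 + 1) + t * hu
  have hD : (t ^ 2 + 1) ^ 2 * (u ^ 2 - v ^ 2) = -8 * t * (t ^ 2 - 1) := by
    linear_combination ((t ^ 2 + 1) * u + (t ^ 2 - 2 * t - 1)) * hu
      - ((t ^ 2 + 1) * v + (-(t ^ 2) - 2 * t + 1)) * hv
  have hy : (-8 * t * (t ^ 2 - 1)) * y = 2 * (t ^ 2 + 1) ^ 2 := by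
    linear_combination -y * hD + (t ^ 2 + 1) ^ 2 * huvy
  refine ⟨t, ht0, ht1, htm1, ?_⟩
  have ht2 : t ^ 2 - 1 ≠ 0 := by
    intro h'
    have h0 : (t - 1) * (t + 1) = 0 := by linear_combination h'
    rcases mul_eq_zero.mp h0 with h'' | h''
    · exact ht1 (by linarith)
    · exact htm1 (by linarith)
  field_simp
  linear_combination (16 * t ^ 2 * (t ^ 2 - 1) ^ 2) * hyc
    - (1 / 4) * ((-8 * t * (t ^ 2 - 1)) * y + 2 * (t ^ 2 + 1) ^ 2) * hy
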